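/- For every integer k ≥ 1 with k ≡ 1 (mod 3), there exists a constant c > 0 (depending only on k) such that for every sufficiently large n there exist a set P of n points in ℝ² and positive distances δ₁, …, δ_k for which P spans at least c · n^{(k+2)/3} k-chains. That is, C_k(n) = Ω(n^{(k+2)/3}). -/

import Mathlib

/-- The number of `k`-chains spanned by a finite point set `P` in `ℝ^d` with respect to a
sequence of distances `δ : Fin k → ℝ`: tuples `(p 0, …, p k)` of pairwise distinct points of
`P` with `dist (p j) (p (j+1)) = δ j` for all `j`. -/
noncomputable def chainCount (d k : ℕ) (P : Finset (EuclideanSpace ℝ (Fin d)))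
    (δ : Fin k → ℝ) : ℕ :=
  Set.ncard {p : Fin (k + 1) → EuclideanSpace ℝ (Fin d) |
    (∀ i, p i ∈ P) ∧ Function.Injective p ∧
    ∀ j : Fin k, dist (p j.castSucc) (p j.succ) = δ j}

/-- `maxChains d k n` is the maximum number of `k`-chains spanned by a set of `n` points in
`ℝ^d`, over all sequences of positive distances. -/
noncomputable def maxChains (d k n : ℕ) : ℕ :=
  sSup {m | ∃ (P : Finset (EuclideanSpace ℝ (Fin d))) (δ : Fin k → ℝ),
    P.card = n ∧ (∀ j, 0 < δ j) ∧ m = chainCount d k P δ}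

noncomputable def pt (a b : ℝ) : EuclideanSpace ℝ (Fin 2) :=
  (WithLp.equiv 2 (Fin 2 → ℝ)).symm ![a, b]

lemma pt_fst (a b : ℝ) : pt a b 0 = a := rfl
lemma pt_snd (a b : ℝ) : pt a b 1 = b := rfl

lemma pt_inj {a b c d : ℝ} (h : pt a b = pt c d) : a = c ∧ b = d := by
  have h0 : pt a b 0 = pt c d 0 := by rw [h]
  have h1 : pt a b 1 = pt c d 1 := by rw [h]
  exact ⟨h0, h1⟩

lemma dist_pt (a b c d : ℝ) :
    dist (pt a b) (pt c d) = Real.sqrt ((a - c)^2 + (b - d)^2) := by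
  rw [EuclideanSpace.dist_eq, Fin.sum_univ_two]
  simp only [pt_fst, pt_snd, Real.dist_eq, sq_abs]

noncomputable def xval (s j : ℕ) : ℝ := (j+1)/(s+2)

noncomputable def yval (s j : ℕ) : ℝ := Real.sqrt (1 - xval s j ^ 2)

lemma xval_pos (s j : ℕ) : 0 < xval s j := by unfold xval; positivity

lemma xval_lt_one {s j : ℕ} (hj : j < s) : xval s j < 1 := by
  unfold xval
  rw [div_lt_one (by positivity)]
  push_cast
  have : (j:ℝ) < s := by exact_mod_cast hj
  linarith

lemma xval_inj {s j j' : ℕ} (h : xval s j = xval s j') : j = j' := by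
  unfold xval at h
  have h2 : (0:ℝ) < s + 2 := by positivity
  field_simp at h
  exact_mod_cast (by linarith : (j:ℝ) = j')

lemma yval_pos {s j : ℕ} (hj : j < s) : 0 < yval s j := by
  unfold yval
  have h1 := xval_pos s j
  have h2 := xval_lt_one hj
  have : xval s j ^ 2 < 1 := by nlinarith
  exact Real.sqrt_pos.mpr (by linarith)

lemma yval_sq {s j : ℕ} (hj : j < s) : yval s j ^ 2 = 1 - xval s j ^ 2 := by
  unfold yval
  have h1 := xval_pos s j
  have h2 := xval_lt_one hj
  exact Real.sq_sqrt (by nlinarith)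

noncomputable def sgn (i : ℕ) : ℝ := if i % 2 = 0 then 1 else -1

lemma sgn_ne_zero (i : ℕ) : sgn i ≠ 0 := by unfold sgn; split <;> norm_num

lemma sgn_sq (i : ℕ) : sgn i ^ 2 = 1 := by unfold sgn; split <;> norm_num

lemma sgn_inj {i i' : ℕ} (h : sgn i = sgn i') : i % 2 = i' % 2 := by
  unfold sgn at h
  rcases Nat.mod_two_eq_zero_or_one i with h1 | h1 <;>
    rcases Nat.mod_two_eq_zero_or_one i' with h2 | h2 <;>
    simp [h1, h2] at h ⊢ <;> norm_num at h

noncomputable def Qpt (s i b j : ℕ) : EuclideanSpace ℝ (Fin 2) :=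
  pt (10*(i+b) + xval s j) (sgn i * yval s j)

noncomputable def Cpt (i : ℕ) : EuclideanSpace ℝ (Fin 2) := pt (10*(i+1)) 0

/-- decode: 10*a + x with x ∈ (0,1) determines a and x -/
lemma decode_ten {a a' : ℕ} {x x' : ℝ} (hx0 : 0 ≤ x) (hx1 : x < 1)
    (hx0' : 0 ≤ x') (hx1' : x' < 1) (h : 10*(a:ℝ) + x = 10*(a':ℝ) + x') :
    a = a' ∧ x = x' := by
  have ha : a = a' := by
    rcases lt_trichotomy a a' with hlt | he | hgt
    · exfalso
      have : (a:ℝ) + 1 ≤ (a':ℝ) := by exact_mod_cast Nat.succ_le_of_lt hlt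
      linarith
    · exact he
    · exfalso
      have : (a':ℝ) + 1 ≤ (a:ℝ) := by exact_mod_cast Nat.succ_le_of_lt hgt
      linarith
  subst ha
  constructor
  · rfl
  · linarith

lemma Qpt_inj {s i b j i' b' j' : ℕ} (hb : b ≤ 1) (hb' : b' ≤ 1)
    (hj : j < s) (hj' : j' < s) (h : Qpt s i b j = Qpt s i' b' j') :
    i = i' ∧ b = b' ∧ j = j' := by
  unfold Qpt at h
  obtain ⟨hx, hy⟩ := pt_inj h
  have h1 : i + b = i' + b' ∧ xval s j = xval s j' := by
    have := decode_ten (a := i+b) (a' := i'+b') (xval_pos s j).le (xval_lt_one hj)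
      (xval_pos s j').le (xval_lt_one hj') (by push_cast; push_cast at hx; linarith)
    exact_mod_cast this
  have hjj : j = j' := xval_inj h1.2
  subst hjj
  have hsgn : sgn i = sgn i' := by
    have hy0 := yval_pos hj
    exact mul_right_cancel₀ (ne_of_gt hy0) hy
  have hmod := sgn_inj hsgn
  have hib := h1.1
  constructor
  · omega
  · constructor
    · omega
    · rfl

noncomputable def F (t s : ℕ) (m : ℕ) : EuclideanSpace ℝ (Fin 2) :=
  if m < t then Cpt m
  else if m < t + 2*(t+1)*s then
    Qpt s (((m-t)/s)/2) (((m-t)/s)%2) ((m-t)%s)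
  else pt (-(10*(m+1))) 0

lemma encode_div {s : ℕ} (hs : 0 < s) (a j : ℕ) (hj : j < s) : (a*s + j)/s = a := by
  rw [mul_comm, Nat.mul_add_div hs, Nat.div_eq_of_lt hj, Nat.add_zero]

lemma encode_mod {s : ℕ} (a j : ℕ) (hj : j < s) : (a*s + j) % s = j := by
  rw [mul_comm, Nat.mul_add_mod, Nat.mod_eq_of_lt hj]

lemma encode_lt {t s i b j : ℕ} (hi : i ≤ t) (hb : b ≤ 1) (hj : j < s) :
    (2*i+b)*s + j < 2*(t+1)*s := by
  calc (2*i+b)*s + j < (2*i+b)*s + s := by omega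
    _ = (2*i+b+1)*s := by ring
    _ ≤ (2*(t+1))*s := Nat.mul_le_mul_right s (by omega)
    _ = 2*(t+1)*s := rfl

lemma F_middle {t s u : ℕ} (hu : u < 2*(t+1)*s) :
    F t s (t+u) = Qpt s (u/s/2) (u/s%2) (u%s) := by
  unfold F
  rw [if_neg (by omega), if_pos (by omega), Nat.add_sub_cancel_left]

lemma F_encode {t s : ℕ} (hs : 0 < s) {i b j : ℕ} (hi : i ≤ t) (hb : b ≤ 1)
    (hj : j < s) : F t s (t + ((2*i+b)*s + j)) = Qpt s i b j := by
  rw [F_middle (encode_lt hi hb hj), encode_div hs _ _ hj, encode_mod _ _ hj]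
  have d1 : (2*i+b)/2 = i := by omega
  have d2 : (2*i+b)%2 = b := by omega
  rw [d1, d2]

lemma F_inj {t s : ℕ} (hs : 0 < s) : Function.Injective (F t s) := by
  intro m m' h
  unfold F at h
  split_ifs at h with h1 h2 h3 h4 h5 h6 h7 h8
  · -- C vs C
    have := (pt_inj h).1
    have : (m:ℝ) = m' := by linarith
    exact_mod_cast this
  · -- C vs Q
    exfalso
    obtain ⟨-, hy⟩ := pt_inj h
    have hy0 := yval_pos (Nat.mod_lt (m' - t) hs)
    have := sgn_ne_zero ((m' - t)/s/2)
    have := mul_ne_zero this (ne_of_gt hy0)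
    exact this hy.symm
  · -- C vs pad
    exfalso
    obtain ⟨hx, -⟩ := pt_inj h
    have h1 : (0:ℝ) < 10*((m:ℝ)+1) := by positivity
    have h2 : (0:ℝ) < 10*((m':ℝ)+1) := by positivity
    linarith
  · -- Q vs C
    exfalso
    obtain ⟨-, hy⟩ := pt_inj h
    have hy0 := yval_pos (Nat.mod_lt (m - t) hs)
    have := mul_ne_zero (sgn_ne_zero ((m - t)/s/2)) (ne_of_gt hy0)
    exact this hy
  · -- Q vs Q
    have hb : (m-t)/s % 2 ≤ 1 := by omega
    have hb' : (m'-t)/s % 2 ≤ 1 := by omega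
    obtain ⟨hi, hbb, hjj⟩ := Qpt_inj hb hb' (Nat.mod_lt _ hs) (Nat.mod_lt _ hs) h
    have e1 : (m-t)/s = (m'-t)/s := by omega
    have e2 := Nat.div_add_mod (m-t) s
    have e3 := Nat.div_add_mod (m'-t) s
    rw [e1, hjj] at e2
    omega
  · -- Q vs pad
    exfalso
    obtain ⟨hx, -⟩ := pt_inj h
    have h1 := xval_pos s ((m-t)%s)
    have h2 : (0:ℝ) ≤ ((m-t)/s/2 : ℕ) := Nat.cast_nonneg _
    have h2' : (0:ℝ) ≤ ((m-t)/s%2 : ℕ) := Nat.cast_nonneg _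
    have h3 : (0:ℝ) ≤ (m':ℝ) := Nat.cast_nonneg _
    linarith
  · -- pad vs C
    exfalso
    obtain ⟨hx, -⟩ := pt_inj h
    have h1 : (0:ℝ) < 10*((m:ℝ)+1) := by positivity
    have h2 : (0:ℝ) < 10*((m':ℝ)+1) := by positivity
    linarith
  · -- pad vs Q
    exfalso
    obtain ⟨hx, -⟩ := pt_inj h
    have h1 := xval_pos s ((m'-t)%s)
    have h2 : (0:ℝ) ≤ ((m'-t)/s/2 : ℕ) := Nat.cast_nonneg _
    have h2' : (0:ℝ) ≤ ((m'-t)/s%2 : ℕ) := Nat.cast_nonneg _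
    have h3 : (0:ℝ) ≤ (m:ℝ) := Nat.cast_nonneg _
    linarith
  · -- pad vs pad
    obtain ⟨hx, -⟩ := pt_inj h
    have : (m:ℝ) = m' := by linarith
    exact_mod_cast this

noncomputable def chainPt (s : ℕ) (J : ℕ → ℕ) (l : ℕ) : EuclideanSpace ℝ (Fin 2) :=
  if l % 3 = 2 then Cpt (l/3) else Qpt s (l/3) (l%3) (J (l/3))

def indx (t s : ℕ) (J : ℕ → ℕ) (l : ℕ) : ℕ :=
  if l % 3 = 2 then l/3 else t + ((2*(l/3) + l%3)*s + J (l/3))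

lemma indx_lt {t s : ℕ} {J : ℕ → ℕ} (hJ : ∀ i, J i < s) {l : ℕ}
    (hl : l ≤ 3*t+1) : indx t s J l < t + 2*(t+1)*s := by
  unfold indx
  split
  · have h2 : l/3 < t := by omega
    have : 0 < 2*(t+1)*s := by
      have := hJ 0
      have hs : 0 < s := by omega
      positivity
    omega
  · have := encode_lt (t := t) (i := l/3) (b := l%3) (j := J (l/3))
      (by omega) (by omega) (hJ _)
    omega

lemma chainPt_eq_F {t s : ℕ} (hs : 0 < s) {J : ℕ → ℕ} (hJ : ∀ i, J i < s) {l : ℕ}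
    (hl : l ≤ 3*t+1) : F t s (indx t s J l) = chainPt s J l := by
  unfold indx chainPt
  split
  · next h =>
    have h2 : l/3 < t := by omega
    unfold F
    rw [if_pos h2]
  · next h =>
    exact F_encode hs (by omega) (by omega) (hJ _)

lemma indx_inj {t s : ℕ} (hs : 0 < s) {J : ℕ → ℕ} (hJ : ∀ i, J i < s) {l l' : ℕ}
    (hl : l ≤ 3*t+1) (hl' : l' ≤ 3*t+1)
    (h : indx t s J l = indx t s J l') : l = l' := by
  unfold indx at h
  split_ifs at h with h1 h2 h3
  · omega
  · exfalso
    have := encode_lt (t := t) (i := l'/3) (b := l'%3) (j := J (l'/3))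
      (by omega) (by omega) (hJ _)
    omega
  · exfalso
    have := encode_lt (t := t) (i := l/3) (b := l%3) (j := J (l/3))
      (by omega) (by omega) (hJ _)
    omega
  · have h' : (2*(l/3) + l%3)*s + J (l/3) = (2*(l'/3) + l'%3)*s + J (l'/3) := by omega
    have e1 : ((2*(l/3) + l%3)*s + J (l/3))/s = 2*(l/3) + l%3 := encode_div hs _ _ (hJ _)
    have e2 : ((2*(l'/3) + l'%3)*s + J (l'/3))/s = 2*(l'/3) + l'%3 := encode_div hs _ _ (hJ _)
    rw [h', e2] at e1
    omega

lemma chain_edge {s : ℕ} {J : ℕ → ℕ} (hJ : ∀ i, J i < s) (l : ℕ) :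
    dist (chainPt s J l) (chainPt s J (l+1)) = if l % 3 = 0 then (10:ℝ) else 1 := by
  have h3 : l % 3 = 0 ∨ l % 3 = 1 ∨ l % 3 = 2 := by omega
  rcases h3 with h | h | h
  · -- l % 3 = 0 : Qpt i 0 j to Qpt i 1 j
    have e1 : (l+1) % 3 = 1 := by omega
    have e2 : (l+1)/3 = l/3 := by omega
    rw [if_pos h]
    unfold chainPt
    rw [if_neg (by omega), if_neg (by omega), e1, e2, h]
    unfold Qpt
    rw [dist_pt]
    have : (10*(((l/3:ℕ):ℝ) + (0:ℕ)) + xval s (J (l/3)) - (10*(((l/3:ℕ):ℝ) + ((1:ℕ):ℝ)) + xval s (J (l/3))))^2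
        + (sgn (l/3) * yval s (J (l/3)) - sgn (l/3) * yval s (J (l/3)))^2 = 10^2 := by
      push_cast
      ring
    rw [this, Real.sqrt_sq (by norm_num)]
  · -- l % 3 = 1 : Qpt i 1 j to Cpt i
    have e1 : (l+1) % 3 = 2 := by omega
    have e2 : (l+1)/3 = l/3 := by omega
    rw [if_neg (by omega)]
    unfold chainPt
    rw [if_neg (by omega), if_pos (by rw [e1]), e2, h]
    unfold Qpt Cpt
    rw [dist_pt]
    have hy := yval_sq (hJ (l/3))
    have hsg := sgn_sq (l/3)
    have : (10*(((l/3:ℕ):ℝ) + ((1:ℕ):ℝ)) + xval s (J (l/3)) - 10*(((l/3:ℕ):ℝ)+1))^2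
        + (sgn (l/3) * yval s (J (l/3)) - 0)^2 = 1 := by
      have expand : (10*(((l/3:ℕ):ℝ) + ((1:ℕ):ℝ)) + xval s (J (l/3)) - 10*(((l/3:ℕ):ℝ)+1))^2
          + (sgn (l/3) * yval s (J (l/3)) - 0)^2
          = xval s (J (l/3))^2 + sgn (l/3)^2 * yval s (J (l/3))^2 := by
        push_cast
        ring
      rw [expand, hsg, hy]
      ring
    rw [this, Real.sqrt_one]
  · -- l % 3 = 2 : Cpt i to Qpt (i+1) 0 j'
    have e1 : (l+1) % 3 = 0 := by omega
    have e2 : (l+1)/3 = l/3 + 1 := by omega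
    rw [if_neg (by omega)]
    unfold chainPt
    rw [if_pos h, if_neg (by omega), e1, e2]
    unfold Qpt Cpt
    rw [dist_pt]
    have hy := yval_sq (hJ (l/3+1))
    have hsg := sgn_sq (l/3+1)
    have : (10*(((l/3:ℕ):ℝ)+1) - (10*(((l/3+1:ℕ):ℝ) + ((0:ℕ):ℝ)) + xval s (J (l/3+1))))^2
        + ((0:ℝ) - sgn (l/3+1) * yval s (J (l/3+1)))^2
        = 1 := by
      have expand : (10*(((l/3:ℕ):ℝ)+1) - (10*(((l/3+1:ℕ):ℝ) + ((0:ℕ):ℝ)) + xval s (J (l/3+1))))^2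
          + ((0:ℝ) - sgn (l/3+1) * yval s (J (l/3+1)))^2
          = xval s (J (l/3+1))^2 + sgn (l/3+1)^2 * yval s (J (l/3+1))^2 := by
        push_cast
        ring
      rw [expand, hsg, hy]
      ring
    rw [this, Real.sqrt_one]


noncomputable def liftJ (t s : ℕ) (J : Fin (t+1) → Fin s) : ℕ → ℕ :=
  fun i => if h : i < t+1 then (J ⟨i, h⟩ : ℕ) else 0

lemma liftJ_lt {t s : ℕ} (hs : 0 < s) (J : Fin (t+1) → Fin s) (i : ℕ) :
    liftJ t s J i < s := by
  unfold liftJ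
  split
  · exact (J _).isLt
  · exact hs

theorem chains_lower_R2_mod3_eq_1 (k : ℕ) (hk : 1 ≤ k) (hmod : k % 3 = 1) :
    ∃ c : ℝ, 0 < c ∧ ∃ N : ℕ, ∀ n : ℕ, N ≤ n →
      ∃ (P : Finset (EuclideanSpace ℝ (Fin 2))) (δ : Fin k → ℝ),
        P.card = n ∧ (∀ j, 0 < δ j) ∧
        c * (n : ℝ) ^ ((k + 2) / 3) ≤ (chainCount 2 k P δ : ℝ) := by
  classical
  obtain ⟨t, ht⟩ : ∃ t, k = 3*t+1 := ⟨k/3, by omega⟩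
  refine ⟨(1 / (4 * ((t:ℝ) + 1))) ^ (t+1), by positivity, 6*(t+1), ?_⟩
  intro n hn
  set s := (n - t) / (2*(t+1)) with hs_def
  have h1 : 2*(t+1) * s + (n-t) % (2*(t+1)) = n - t := Nat.div_add_mod _ _
  have h2 : (n-t) % (2*(t+1)) < 2*(t+1) := Nat.mod_lt _ (by omega)
  set M := 2*(t+1)*s with hM
  have hs : 0 < s := by
    rcases Nat.eq_zero_or_pos s with h0 | h0
    · exfalso
      have : M = 0 := by rw [hM, h0]; ring
      omega
    · exact h0
  have h4 : n ≤ 4*(t+1)*s := by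
    have he : 4*(t+1)*s = 2*M := by rw [hM]; ring
    omega
  have hsn : t + 2*(t+1)*s ≤ n := by
    have : t + M ≤ n := by omega
    rw [hM] at this
    exact this
  refine ⟨(Finset.range n).image (F t s),
    fun j => if (j:ℕ) % 3 = 0 then (10:ℝ) else 1, ?_, ?_, ?_⟩
  · rw [Finset.card_image_of_injective _ (F_inj hs), Finset.card_range]
  · intro j
    dsimp only
    split <;> norm_num
  · -- the counting
    have hexp : (k+2)/3 = t+1 := by omega
    rw [hexp]
    set P := (Finset.range n).image (F t s) with hP
    set S := {p : Fin (k + 1) → EuclideanSpace ℝ (Fin 2) |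
      (∀ i, p i ∈ P) ∧ Function.Injective p ∧
      ∀ j : Fin k, dist (p j.castSucc) (p j.succ) =
        (if (j:ℕ) % 3 = 0 then (10:ℝ) else 1)} with hS
    have hCC : chainCount 2 k P (fun j => if (j:ℕ) % 3 = 0 then (10:ℝ) else 1)
        = Set.ncard S := rfl
    -- the injection Φ
    have hval : ∀ l : Fin (k+1), (l : ℕ) ≤ 3*t+1 := by
      intro l; have := l.isLt; omega
    set Φ : (Fin (t+1) → Fin s) → (Fin (k+1) → EuclideanSpace ℝ (Fin 2)) :=
      fun J l => chainPt s (liftJ t s J) l.val with hΦ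
    have hmem : ∀ J, Φ J ∈ S := by
      intro J
      have hJ := liftJ_lt hs J
      refine ⟨?_, ?_, ?_⟩
      · intro l
        rw [hΦ]
        dsimp only
        rw [← chainPt_eq_F hs hJ (hval l)]
        exact Finset.mem_image.mpr ⟨indx t s (liftJ t s J) l.val,
          Finset.mem_range.mpr (lt_of_lt_of_le (indx_lt hJ (hval l)) hsn), rfl⟩
      · intro l l' hll
        rw [hΦ] at hll
        dsimp only at hll
        rw [← chainPt_eq_F hs hJ (hval l), ← chainPt_eq_F hs hJ (hval l')] at hll
        exact Fin.ext (indx_inj hs hJ (hval l) (hval l') (F_inj hs hll))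
      · intro j
        rw [hΦ]
        dsimp only
        have hc : ((j.castSucc : Fin (k+1)) : ℕ) = (j : ℕ) := rfl
        have hsucc : ((j.succ : Fin (k+1)) : ℕ) = (j : ℕ) + 1 := rfl
        rw [hc, hsucc]
        exact chain_edge hJ j.val
    have hinj : Function.Injective Φ := by
      intro J J' hJJ
      funext i
      have hJ := liftJ_lt hs J
      have hJ' := liftJ_lt hs J'
      have h3i : 3 * (i:ℕ) < k + 1 := by have := i.isLt; omega
      have := congrFun hJJ ⟨3 * (i:ℕ), h3i⟩
      rw [hΦ] at this
      dsimp only at this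
      have hle : 3 * (i:ℕ) ≤ 3*t+1 := by have := i.isLt; omega
      rw [← chainPt_eq_F hs hJ hle, ← chainPt_eq_F hs hJ' hle] at this
      have hind := F_inj hs this
      unfold indx at hind
      rw [if_neg (by omega), if_neg (by omega)] at hind
      have heq : liftJ t s J (3*(i:ℕ)/3) = liftJ t s J' (3*(i:ℕ)/3) := by omega
      have hdiv : 3*(i:ℕ)/3 = (i:ℕ) := by omega
      rw [hdiv] at heq
      unfold liftJ at heq
      rw [dif_pos i.isLt, dif_pos i.isLt] at heq
      have : J ⟨(i:ℕ), i.isLt⟩ = J' ⟨(i:ℕ), i.isLt⟩ := Fin.ext heq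
      simpa using this
    have hsub : Set.range Φ ⊆ S := by
      rintro p ⟨J, rfl⟩
      exact hmem J
    have hfin : S.Finite := by
      apply Set.Finite.subset (Set.Finite.pi (fun _ : Fin (k+1) => P.finite_toSet))
      intro p hp
      rw [Set.mem_pi]
      intro i _
      exact hp.1 i
    have hcard : s ^ (t+1) ≤ Set.ncard S := by
      calc s ^ (t+1) = Nat.card (Fin (t+1) → Fin s) := by
            simp [Nat.card_eq_fintype_card]
        _ = Nat.card (Set.range Φ) := (Nat.card_range_of_injective hinj).symm
        _ = (Set.range Φ).ncard := Nat.card_coe_set_eq _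
        _ ≤ S.ncard := Set.ncard_le_ncard hsub hfin
    have hdiv : (n:ℝ) / (4 * ((t:ℝ) + 1)) ≤ (s:ℝ) := by
      rw [div_le_iff₀ (by positivity)]
      have : ((n:ℕ):ℝ) ≤ ((4*(t+1)*s : ℕ) : ℝ) := Nat.cast_le.mpr h4
      push_cast at this
      linarith
    calc (1 / (4 * ((t:ℝ) + 1))) ^ (t+1) * (n:ℝ) ^ (t+1)
        = ((n:ℝ) / (4 * ((t:ℝ) + 1))) ^ (t+1) := by
          rw [← mul_pow, one_div_mul_eq_div]
      _ ≤ (s:ℝ) ^ (t+1) := pow_le_pow_left₀ (by positivity) hdiv _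
      _ ≤ (chainCount 2 k P (fun j => if (j:ℕ) % 3 = 0 then (10:ℝ) else 1) : ℝ) := by
          rw [hCC]
          exact_mod_cast Nat.cast_le.mpr hcard
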